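/- Strong direct product theorem for memoryless algorithms: let G^× = G_1 × ⋯ × G_k be a direct product of plain games and let A be a (T_1,…,T_k)-memoryless algorithm for G^×. Then the winning probability of A is at most ∏_{i=1}^k ε_{G_i}(T_i). -/

import Mathlib

open scoped ENNReal BigOperators

noncomputable section

/-- `{0,1}`-valued indicator of a proposition, in `ℝ≥0∞`. -/
def ind (p : Prop) : ℝ≥0∞ :=
  haveI := Classical.propDecidable p
  if p then 1 else 0

/-- Deterministic oracle algorithms making at most `T` queries, modeled as decision
trees of depth at most `T`: a query is an element `q : Q`, the oracle's answer to `q`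
has type `Ans q`, and the final output has type `O`. -/
inductive DT (Q : Type) (Ans : Q → Type) (O : Type) : ℕ → Type
  | ret {T : ℕ} (o : O) : DT Q Ans O T
  | query {T : ℕ} (q : Q) (cont : Ans q → DT Q Ans O T) : DT Q Ans O (T + 1)

/-- Run a decision tree against an oracle. -/
def DT.run {Q : Type} {Ans : Q → Type} {O : Type} :
    {T : ℕ} → DT Q Ans O T → ((q : Q) → Ans q) → O
  | _, DT.ret o, _ => o
  | _, DT.query q cont, f => DT.run (cont (f q)) f

/-- The number of queries satisfying `p` made along the execution path on oracle `f`. -/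
def DT.countP {Q : Type} {Ans : Q → Type} {O : Type} (p : Q → Prop) :
    {T : ℕ} → DT Q Ans O T → ((q : Q) → Ans q) → ℕ
  | _, DT.ret _, _ => 0
  | _, DT.query q cont, f =>
      (haveI := Classical.propDecidable (p q); if p q then 1 else 0)
        + DT.countP p (cont (f q)) f

/-- A (single-challenge) game: an oracle distribution `μ` over functions
`Fin M → Fin N`, a challenge distribution `π f` for each oracle `f`, and an
accepting outcome set `R f ch` for each oracle and challenge. -/
structure Game where
  M : ℕ
  N : ℕ
  hM : 0 < M
  hN : 0 < N
  Ch : Type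
  chFin : Fintype Ch
  Out : Type
  μ : PMF (Fin M → Fin N)
  π : (Fin M → Fin N) → PMF Ch
  R : (Fin M → Fin N) → Ch → Set Out

attribute [instance] Game.chFin

namespace Game

variable (G : Game)

/-- Winning probability of a deterministic `T`-query algorithm (taking the challenge
as classical input) for the game `G`. -/
def detWinProb {T : ℕ} (a : G.Ch → DT (Fin G.M) (fun _ => Fin G.N) G.Out T) : ℝ≥0∞ :=
  ∑' f : Fin G.M → Fin G.N, G.μ f * ∑' ch : G.Ch, G.π f ch * ind ((a ch).run f ∈ G.R f ch)

/-- Uniform security `ε_G(T)`: the supremum, over randomized `T`-query algorithms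
(probability distributions over deterministic ones), of the winning probability. -/
def unifSec (T : ℕ) : ℝ≥0∞ :=
  ⨆ A : PMF (G.Ch → DT (Fin G.M) (fun _ => Fin G.N) G.Out T),
    ∑' a, A a * G.detWinProb a

/-- Winning probability, in the salted game `G_K`, of a non-uniform algorithm:
a randomized `T`-query algorithm `A` receiving `S` bits of advice together with the
salt and challenge, and an advice function `adv` mapping the joint oracle to `S` bits.
The joint oracle consists of `K` i.i.d. copies `g 0, …, g (K-1)` of the oracle of `G`,
the salt `k` is uniform on `Fin K` and the challenge is drawn from `π (g k)`. -/
def saltedWinProb (K S T : ℕ)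
    (A : PMF ((Fin S → Bool) × Fin K × G.Ch →
      DT (Fin K × Fin G.M) (fun _ => Fin G.N) G.Out T))
    (adv : (Fin K → Fin G.M → Fin G.N) → Fin S → Bool) : ℝ≥0∞ :=
  ∑' g : Fin K → Fin G.M → Fin G.N,
    (∏ k, G.μ (g k)) *
      ((K : ℝ≥0∞)⁻¹ *
        ∑' k : Fin K, ∑' ch : G.Ch, G.π (g k) ch *
          ∑' a, A a *
            ind ((a (adv g, k, ch)).run (fun q => g q.1 q.2) ∈ G.R (g k) ch))

/-- Non-uniform security `ε_{G_K}(S,T)` of the salted game `G_K`: the supremum of the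
winning probability over all non-uniform `(S,T)`-algorithms `(A, adv)`. -/
def saltedNonunifSec (K S T : ℕ) : ℝ≥0∞ :=
  ⨆ (A : PMF ((Fin S → Bool) × Fin K × G.Ch →
      DT (Fin K × Fin G.M) (fun _ => Fin G.N) G.Out T))
    (adv : (Fin K → Fin G.M → Fin G.N) → Fin S → Bool),
    G.saltedWinProb K S T A adv

/-- The marginal probability of a challenge `ch` (for `f ∼ μ`, `ch ∼ π f`). -/
def chProb (ch : G.Ch) : ℝ≥0∞ := ∑' f : Fin G.M → Fin G.N, G.μ f * G.π f ch

/-- The oracle distribution `μ_ch` conditioned on the drawn challenge being `ch`. -/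
def condDist (ch : G.Ch) (f : Fin G.M → Fin G.N) : ℝ≥0∞ :=
  G.μ f * G.π f ch / G.chProb ch

/-- Uniform security `ε_{G_ch}(T)` of the challenge-conditioned plain game `G_ch`:
the supremum over randomized `T`-query algorithms of the probability, for
`f ∼ μ_ch`, that the output lies in `R f ch`. -/
def condSec (ch : G.Ch) (T : ℕ) : ℝ≥0∞ :=
  ⨆ A : PMF (DT (Fin G.M) (fun _ => Fin G.N) G.Out T),
    ∑' a, A a * ∑' f : Fin G.M → Fin G.N, G.condDist ch f * ind (a.run f ∈ G.R f ch)

/-- Uniform security `ε_{G^n}(T')` of the multi-challenge game `G^n`: `n` i.i.d.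
challenges are drawn from `π f` and the algorithm must answer all of them. -/
def multiSec (n T' : ℕ) : ℝ≥0∞ :=
  ⨆ A : PMF ((Fin n → G.Ch) → DT (Fin G.M) (fun _ => Fin G.N) (Fin n → G.Out) T'),
    ∑' a, A a * ∑' f : Fin G.M → Fin G.N, G.μ f *
      ∑' chs : Fin n → G.Ch,
        (∏ j, G.π f (chs j)) * ind (∀ j, (a chs).run f j ∈ G.R f (chs j))

end Game

/-- A plain game: a game without challenges. -/
structure PlainGame where
  M : ℕ
  N : ℕ
  hM : 0 < M
  hN : 0 < N
  Out : Type
  μ : PMF (Fin M → Fin N)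
  R : (Fin M → Fin N) → Set Out

namespace PlainGame

/-- Uniform security `ε_G(T)` of a plain game. -/
def unifSec (G : PlainGame) (T : ℕ) : ℝ≥0∞ :=
  ⨆ A : PMF (DT (Fin G.M) (fun _ => Fin G.N) G.Out T),
    ∑' a, A a * ∑' f : Fin G.M → Fin G.N, G.μ f * ind (a.run f ∈ G.R f)

end PlainGame

/-- Query domain for joint oracle access to the oracles of `k` plain games:
each query is addressed to one of the oracles. -/
abbrev ProdQ {k : ℕ} (Gs : Fin k → PlainGame) : Type := (i : Fin k) × Fin (Gs i).M

/-- Answer type for queries in the direct product. -/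
abbrev ProdAns {k : ℕ} (Gs : Fin k → PlainGame) : ProdQ Gs → Type :=
  fun q => Fin (Gs q.1).N

/-- The joint oracle `(f 0, …, f (k-1))` as a single oracle function. -/
def jointOracle {k : ℕ} {Gs : Fin k → PlainGame}
    (f : (i : Fin k) → Fin (Gs i).M → Fin (Gs i).N) : (q : ProdQ Gs) → ProdAns Gs q :=
  fun q => f q.1 q.2

/-- Winning probability of a `(T 0, …, T (k-1))`-memoryless algorithm, given by
deterministic algorithms `A i` (each making at most `T i` queries and each with
joint oracle access) run sequentially with no shared memory; the oracles are drawn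
independently, and the algorithm wins if every output `(A i).run` is accepted. -/
def memorylessWinProb {k : ℕ} (Gs : Fin k → PlainGame) {T : Fin k → ℕ}
    (A : (i : Fin k) → DT (ProdQ Gs) (ProdAns Gs) (Gs i).Out (T i)) : ℝ≥0∞ :=
  ∑' f : (i : Fin k) → Fin (Gs i).M → Fin (Gs i).N,
    (∏ i, (Gs i).μ (f i)) * ind (∀ i, (A i).run (jointOracle f) ∈ (Gs i).R (f i))

/-- Winning probability of a deterministic algorithm with joint oracle access
outputting a tuple `(e 0, …, e (k-1))` for the direct product game. -/
def jointWinProb {k : ℕ} (Gs : Fin k → PlainGame) {B : ℕ}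
    (A : DT (ProdQ Gs) (ProdAns Gs) ((i : Fin k) → (Gs i).Out) B) : ℝ≥0∞ :=
  ∑' f : (i : Fin k) → Fin (Gs i).M → Fin (Gs i).N,
    (∏ i, (Gs i).μ (f i)) * ind (∀ i, A.run (jointOracle f) i ∈ (Gs i).R (f i))

/-- A deterministic algorithm is `(T 0, …, T (k-1))`-fair if in every execution it
makes at most `T i` queries to the `i`-th oracle. -/
def IsFair {k : ℕ} {Gs : Fin k → PlainGame} {O : Type} {B : ℕ} (T : Fin k → ℕ)
    (A : DT (ProdQ Gs) (ProdAns Gs) O B) : Prop :=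
  ∀ (f : (i : Fin k) → Fin (Gs i).M → Fin (Gs i).N) (i : Fin k),
    A.countP (fun q => q.1 = i) (jointOracle f) ≤ T i

end

/- ===================== auxiliary development for memoryless_sdpt ===================== -/

noncomputable section

lemma ind_of_true {p : Prop} (h : p) : ind p = 1 := by simp [ind, h]
lemma ind_of_false {p : Prop} (h : ¬ p) : ind p = 0 := by simp [ind, h]
lemma ind_congr {p q : Prop} (h : p ↔ q) : ind p = ind q := by
  by_cases hp : p
  · rw [ind_of_true hp, ind_of_true (h.mp hp)]
  · rw [ind_of_false hp, ind_of_false (fun hq => hp (h.mpr hq))]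

lemma prod_ind {α : Type*} [Fintype α] (P : α → Prop) :
    (∏ a : α, ind (P a)) = ind (∀ a, P a) := by
  by_cases h : ∀ a, P a
  · rw [ind_of_true h]; exact Finset.prod_eq_one (fun a _ => ind_of_true (h a))
  · rw [ind_of_false h]
    push_neg at h
    obtain ⟨a, ha⟩ := h
    exact Finset.prod_eq_zero (Finset.mem_univ a) (ind_of_false ha)

namespace SDPTaux

lemma sum_iSup_le {α : Type*} [Fintype α] {ι : Type*} [Nonempty ι]
    (g : α → ι → ℝ≥0∞) {X : ℝ≥0∞}
    (h : ∀ c : α → ι, (∑ a : α, g a (c a)) ≤ X) :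
    (∑ a : α, ⨆ i, g a i) ≤ X := by
  classical
  have key : ∀ s : Finset α, (∑ a ∈ s, ⨆ i, g a i) ≤ ⨆ c : α → ι, ∑ a ∈ s, g a (c a) := by
    intro s
    induction s using Finset.induction with
    | empty => simp
    | @insert x s hx ih =>
      rw [Finset.sum_insert hx]
      calc (⨆ i, g x i) + ∑ a ∈ s, ⨆ i, g a i
          ≤ (⨆ i, g x i) + ⨆ c : α → ι, ∑ a ∈ s, g a (c a) := by
            exact add_le_add le_rfl ih
        _ ≤ ⨆ c : α → ι, ∑ a ∈ insert x s, g a (c a) := by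
            refine ENNReal.iSup_add_iSup_le (fun i c => ?_)
            refine le_trans ?_ (le_iSup _ (Function.update c x i))
            rw [Finset.sum_insert hx, Function.update_self]
            gcongr with a ha
            rw [Function.update_of_ne (by rintro rfl; exact hx ha)]
  refine le_trans (key Finset.univ) (iSup_le fun c => h c)

lemma sum_ind_mul {α : Type*} [Fintype α] (b : α) (F : α → ℝ≥0∞) :
    (∑ a : α, ind (b = a) * F a) = F b := by
  rw [Fintype.sum_eq_single b]
  · rw [ind_of_true rfl, one_mul]
  · intro a ha
    rw [ind_of_false (fun h => ha h.symm), zero_mul]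

lemma sum_pi_ind_mul {γ : Type*} [Fintype γ] [DecidableEq γ] {β : γ → Type*}
    [∀ g, Fintype (β g)] (b : ∀ g, β g) (F : (∀ g, β g) → ℝ≥0∞) :
    (∑ v : ∀ g, β g, (∏ g, ind (b g = v g)) * F v) = F b := by
  classical
  rw [Fintype.sum_eq_single b]
  · rw [Finset.prod_eq_one (fun g _ => ind_of_true rfl), one_mul]
  · intro v hv
    have : ∃ g, b g ≠ v g := by
      by_contra h; push_neg at h; exact hv (funext fun g => (h g).symm)
    obtain ⟨g, hg⟩ := this
    rw [Finset.prod_eq_zero (Finset.mem_univ g) (ind_of_false hg), zero_mul]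

lemma prod_update_eval {k : ℕ} {γ : Fin k → Type*} (A : ∀ l, γ l) (i : Fin k) (s : γ i)
    (G : ∀ l, γ l → ℝ≥0∞) :
    (∏ l, G l (Function.update A i s l)) =
      G i s * ∏ l ∈ Finset.univ.erase i, G l (A l) := by
  classical
  rw [← Finset.mul_prod_erase Finset.univ _ (Finset.mem_univ i), Function.update_self]
  congr 1
  exact Finset.prod_congr rfl fun l hl =>
    by rw [Function.update_of_ne (Finset.ne_of_mem_erase hl)]


lemma sum_update_eval {k : ℕ} {γ : Fin k → Type*} (A : ∀ l, γ l) (i : Fin k) (s : γ i)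
    (G : ∀ l, γ l → ℕ) :
    (∑ l, G l (Function.update A i s l)) =
      G i s + ∑ l ∈ Finset.univ.erase i, G l (A l) := by
  classical
  rw [← Finset.add_sum_erase Finset.univ _ (Finset.mem_univ i), Function.update_self]
  congr 1
  exact Finset.sum_congr rfl fun l hl =>
    by rw [Function.update_of_ne (Finset.ne_of_mem_erase hl)]

section UpdMany
variable {ι : Type*} [DecidableEq ι] {β : ι → Type*} {γ : Type*}

/-- apply a list of updates. -/
def updMany (pos : γ → ι) (val : ∀ g : γ, β (pos g)) : List γ → (∀ i, β i) → (∀ i, β i)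
  | [], A => A
  | g :: L, A => Function.update (updMany pos val L A) (pos g) (val g)

lemma updMany_eq_of_not_mem (pos : γ → ι) (val : ∀ g : γ, β (pos g)) (A : ∀ i, β i)
    (L : List γ) (i : ι) (h : ∀ g ∈ L, pos g ≠ i) : updMany pos val L A i = A i := by
  induction L with
  | nil => rfl
  | cons g L ihL =>
    simp only [updMany]
    rw [Function.update_of_ne (Ne.symm (h g (by simp)))]
    exact ihL (fun g' hg' => h g' (by simp [hg']))

lemma updMany_eq_of_mem (pos : γ → ι) (val : ∀ g : γ, β (pos g)) (A : ∀ i, β i)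
    (L : List γ) (g : γ) (hg : g ∈ L) (hnd : (L.map pos).Nodup) :
    updMany pos val L A (pos g) = val g := by
  induction L with
  | nil => simp at hg
  | cons g' L ihL =>
    simp only [List.map_cons, List.nodup_cons] at hnd
    rcases List.mem_cons.mp hg with rfl | hg'
    · simp [updMany]
    · have hne : pos g' ≠ pos g := fun he => hnd.1 (he ▸ List.mem_map_of_mem (f := pos) hg')
      simp only [updMany]
      rw [Function.update_of_ne (Ne.symm hne)]
      exact ihL hg' hnd.2
end UpdMany

/-- Cycle extraction from a self-map preserving a finite set. -/
lemma exists_cycle {k : ℕ} (Act : Finset (Fin k)) (j : Fin k → Fin k)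
    (hAct : ∀ i ∈ Act, j i ∈ Act) (i₀ : Fin k) (hi₀ : i₀ ∈ Act) :
    ∃ (per : ℕ) (_ : 0 < per) (c : ZMod per → Fin k),
      Function.Injective c ∧ (∀ z, c z ∈ Act) ∧ (∀ z, j (c z) = c (z + 1)) := by
  classical
  have hiter : ∀ (x : Fin k), x ∈ Act → ∀ n, j^[n] x ∈ Act := by
    intro x hx n; induction n with
    | zero => simpa
    | succ n ih => rw [Function.iterate_succ_apply']; exact hAct _ ih
  have hcard : Fintype.card (Fin k) < Fintype.card (Fin (k + 1)) := by simp
  obtain ⟨x, y, hxy, hfxy⟩ :=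
    Fintype.exists_ne_map_eq_of_card_lt (fun n : Fin (k + 1) => j^[n.val] i₀) hcard
  have hab : ∃ a b : ℕ, a < b ∧ j^[a] i₀ = j^[b] i₀ := by
    have hvne : x.val ≠ y.val := fun h => hxy (Fin.val_injective h)
    rcases lt_or_gt_of_ne hvne with h | h
    · exact ⟨x.val, y.val, h, hfxy⟩
    · exact ⟨y.val, x.val, h, hfxy.symm⟩
  obtain ⟨a, b, hab, heq⟩ := hab
  set x₀ := j^[a] i₀ with hx₀
  have hx₀Act : x₀ ∈ Act := hiter i₀ hi₀ a
  have hP : ∃ n, 0 < n ∧ j^[n] x₀ = x₀ := by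
    refine ⟨b - a, by omega, ?_⟩
    rw [hx₀, ← Function.iterate_add_apply, show b - a + a = b by omega]
    exact heq.symm
  set per := Nat.find hP with hper_def
  obtain ⟨hper, hfix⟩ : 0 < per ∧ j^[per] x₀ = x₀ := Nat.find_spec hP
  haveI : NeZero per := ⟨hper.ne'⟩
  have hperiod : ∀ n, j^[n] x₀ = j^[n % per] x₀ := by
    have haux : ∀ q r, j^[per * q + r] x₀ = j^[r] x₀ := by
      intro q; induction q with
      | zero => simp
      | succ q ih =>
        intro r
        rw [show per * (q + 1) + r = (per * q + r) + per by ring,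
          Function.iterate_add_apply, hfix, ih]
    intro n
    conv_lhs => rw [show n = per * (n / per) + n % per from (Nat.div_add_mod n per).symm]
    exact haux _ _
  refine ⟨per, hper, fun z => j^[z.val] x₀, ?_, fun z => hiter x₀ hx₀Act _, ?_⟩
  · intro z z' hzz'
    simp only at hzz'
    by_contra hne
    have hvne : z.val ≠ z'.val := fun h => hne (ZMod.val_injective per h)
    have key : ∀ u v : ℕ, u < v → v < per → j^[u] x₀ = j^[v] x₀ → False := by
      intro u v huv hv huv_eq
      have h1 : j^[per - v + u] x₀ = x₀ := by
        rw [Function.iterate_add_apply, huv_eq, ← Function.iterate_add_apply,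
          show per - v + v = per by omega, hfix]
      exact Nat.find_min hP (m := per - v + u) (by omega) ⟨by omega, h1⟩
    rcases lt_or_gt_of_ne hvne with h | h
    · exact key _ _ h (ZMod.val_lt z') hzz'
    · exact key _ _ h (ZMod.val_lt z) hzz'.symm
  · intro z
    show j (j^[z.val] x₀) = j^[(z + 1).val] x₀
    have h2 : (z + 1).val = (z.val + 1) % per := by
      rw [ZMod.val_add, ZMod.val_one_eq_one_mod, Nat.add_mod_mod]
    rw [← Function.iterate_succ_apply' j _ x₀, h2, ← hperiod]

/- ------------ sigma-packaged decision trees ------------ -/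

def DT.lift {Q : Type} {Ans : Q → Type} {O : Type} :
    {T : ℕ} → DT Q Ans O T → DT Q Ans O (T + 1)
  | _, .ret o => .ret o
  | _, .query q cont => .query q (fun a => DT.lift (cont a))

lemma DT.run_lift {Q : Type} {Ans : Q → Type} {O : Type} :
    ∀ {T : ℕ} (A : DT Q Ans O T) (g : (q : Q) → Ans q),
    (DT.lift A).run g = A.run g
  | _, .ret _, _ => rfl
  | _, .query q cont, g => DT.run_lift (cont (g q)) g

abbrev STree (Q : Type) (Ans : Q → Type) (O : Type) : Type := Σ t : ℕ, DT Q Ans O t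

def STree.root {Q : Type} {Ans : Q → Type} {O : Type} :
    STree Q Ans O → O ⊕ ((q : Q) × (Ans q → STree Q Ans O))
  | ⟨_, .ret o⟩ => .inl o
  | ⟨_, .query q cont⟩ => .inr ⟨q, fun a => ⟨_, cont a⟩⟩

lemma STree.run_of_root_ret {Q : Type} {Ans : Q → Type} {O : Type}
    {s : STree Q Ans O} {o : O}
    (h : STree.root s = .inl o) (g : (q : Q) → Ans q) : s.2.run g = o := by
  obtain ⟨t, A⟩ := s
  cases A with
  | ret o' => simp [STree.root] at h; simpa [DT.run] using h
  | query q cont => simp [STree.root] at h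

lemma STree.root_query_elim {Q : Type} {Ans : Q → Type} {O : Type}
    {s : STree Q Ans O} {q : Q}
    {br : Ans q → STree Q Ans O} (h : STree.root s = .inr ⟨q, br⟩) :
    (∀ a, (br a).1 + 1 = s.1) ∧
    (∀ g : (q : Q) → Ans q, s.2.run g = ((br (g q)).2.run g)) := by
  obtain ⟨t, A⟩ := s
  cases A with
  | ret o' => simp [STree.root] at h
  | query q' cont =>
    simp only [STree.root, Sum.inr.injEq] at h
    obtain ⟨rfl, hbr⟩ := Sigma.mk.inj_iff.mp h
    have hbr' : br = fun a => ⟨_, cont a⟩ := (eq_of_heq hbr).symm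
    subst hbr'
    exact ⟨fun a => rfl, fun g => rfl⟩

/- ------------ the per-game security and the product value ------------ -/

variable {k : ℕ} (Gs : Fin k → PlainGame)

abbrev OC (i : Fin k) : Type := Fin (Gs i).M → Fin (Gs i).N
abbrev JTree (i : Fin k) : Type := STree (ProdQ Gs) (ProdAns Gs) (Gs i).Out

lemma root_retarget {i : Fin k} {s : JTree Gs i} {q : ProdQ Gs}
    {br : ProdAns Gs q → JTree Gs i}
    (h : STree.root s = .inr ⟨q, br⟩) {j : Fin k} (e : q.1 = j) :
    ∃ (x : Fin (Gs j).M) (br' : Fin (Gs j).N → JTree Gs i),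
      STree.root s = .inr ⟨⟨j, x⟩, br'⟩ := by
  obtain ⟨j₀, x₀⟩ := q
  subst e
  exact ⟨x₀, br, h⟩

/-- security of game `i` against `t`-query single-oracle algorithms, for weight `wi`. -/
def eps (i : Fin k) (Ri : OC Gs i → Set (Gs i).Out) (wi : OC Gs i → ℝ≥0∞) (t : ℕ) : ℝ≥0∞ :=
  ⨆ C : DT (Fin (Gs i).M) (fun _ => Fin (Gs i).N) (Gs i).Out t,
    ∑ h : OC Gs i, wi h * ind (C.run h ∈ Ri h)

lemma ret_le_eps (i : Fin k) (Ri : OC Gs i → Set (Gs i).Out) (wi : OC Gs i → ℝ≥0∞)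
    (t : ℕ) (o : (Gs i).Out) :
    (∑ h : OC Gs i, wi h * ind (o ∈ Ri h)) ≤ eps Gs i Ri wi t :=
  le_iSup_of_le (DT.ret o) (le_of_eq rfl)

lemma eps_mono (i : Fin k) (Ri : OC Gs i → Set (Gs i).Out) (wi : OC Gs i → ℝ≥0∞)
    (t : ℕ) : eps Gs i Ri wi t ≤ eps Gs i Ri wi (t + 1) := by
  refine iSup_le fun C => le_iSup_of_le (DT.lift C) (le_of_eq ?_)
  exact Finset.sum_congr rfl fun h _ => by rw [DT.run_lift]

lemma eps_triv_le (i : Fin k) (wi : OC Gs i → ℝ≥0∞) (t : ℕ) :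
    eps Gs i (fun _ => Set.univ) wi t ≤ ∑ h : OC Gs i, wi h := by
  refine iSup_le fun C => le_of_eq ?_
  exact Finset.sum_congr rfl fun h _ => by
    rw [ind_of_true (Set.mem_univ _), mul_one]

lemma eps_compose (i : Fin k) (Ri : OC Gs i → Set (Gs i).Out) (wi : OC Gs i → ℝ≥0∞)
    (t : ℕ) (x : Fin (Gs i).M) :
    (∑ a : Fin (Gs i).N, eps Gs i Ri (fun h => wi h * ind (h x = a)) t)
      ≤ eps Gs i Ri wi (t + 1) := by
  by_cases hne : Nonempty (DT (Fin (Gs i).M) (fun _ => Fin (Gs i).N) (Gs i).Out t)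
  · refine sum_iSup_le _ (fun c => ?_)
    refine le_iSup_of_le (DT.query x c) ?_
    rw [Finset.sum_comm]
    refine le_of_eq (Finset.sum_congr rfl fun h _ => ?_)
    calc ∑ a, (wi h * ind (h x = a)) * ind ((c a).run h ∈ Ri h)
        = ∑ a, ind (h x = a) * (wi h * ind ((c a).run h ∈ Ri h)) := by
          refine Finset.sum_congr rfl fun a _ => by ring
      _ = wi h * ind ((c (h x)).run h ∈ Ri h) := sum_ind_mul _ _
      _ = wi h * ind ((DT.query x c).run h ∈ Ri h) := rfl
  · haveI := not_nonempty_iff.mp hne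
    have h0 : ∀ a : Fin (Gs i).N,
        eps Gs i Ri (fun h => wi h * ind (h x = a)) t = 0 := fun a => by
      rw [eps, iSup_of_empty]; rfl
    simp only [h0, Finset.sum_const_zero]
    exact zero_le

/-- the product value of a tuple of joint trees w.r.t. weights `w` and goals `R`. -/
def Vval (w : ∀ i, OC Gs i → ℝ≥0∞) (R : ∀ i, OC Gs i → Set (Gs i).Out)
    (A : ∀ i, JTree Gs i) : ℝ≥0∞ :=
  ∑ f : ∀ i, OC Gs i,
    (∏ i, w i (f i)) * ∏ i, ind ((A i).2.run (jointOracle f) ∈ R i (f i))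

/-- number of games with a nontrivial goal. -/
def actR (R : ∀ i, OC Gs i → Set (Gs i).Out) : Finset (Fin k) :=
  @Finset.filter _ (fun i => R i ≠ fun _ => Set.univ) (Classical.decPred _) Finset.univ

lemma mem_actR {R : ∀ i, OC Gs i → Set (Gs i).Out} {i : Fin k} :
    i ∈ actR Gs R ↔ R i ≠ fun _ => Set.univ := by
  unfold actR
  exact ⟨fun h => ((@Finset.mem_filter _ _ (Classical.decPred _) _ _).mp h).2,
    fun h => (@Finset.mem_filter _ _ (Classical.decPred _) _ _).mpr ⟨Finset.mem_univ i, h⟩⟩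

theorem main_ineq (m : ℕ) (w : ∀ i, OC Gs i → ℝ≥0∞)
    (R : ∀ i, OC Gs i → Set (Gs i).Out) (A : ∀ i, JTree Gs i)
    (hm : (∑ i, (A i).1) * (k + 1) + (actR Gs R).card ≤ m) :
    Vval Gs w R A ≤ ∏ i, eps Gs i (R i) (w i) ((A i).1) := by
  classical
  induction m using Nat.strong_induction_on generalizing w R A with
  | _ m ih =>
  by_cases hret : ∃ i, (R i ≠ fun _ => Set.univ) ∧ ∃ o, STree.root (A i) = Sum.inl o
  -- ===================== Case 1 : retire a `ret`-rooted nontrivial game ============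
  · obtain ⟨i, hRi, o, hroot⟩ := hret
    set w' := Function.update w i (fun h0 => w i h0 * ind (o ∈ R i h0)) with hw'
    set R' := Function.update R i (fun _ => (Set.univ : Set (Gs i).Out)) with hR'
    have hVeq : Vval Gs w R A = Vval Gs w' R' A := by
      rw [Vval, Vval]
      refine Finset.sum_congr rfl fun f _ => ?_
      have h1 : (∏ l, w' l (f l)) =
          (w i (f i) * ind (o ∈ R i (f i))) * ∏ l ∈ Finset.univ.erase i, w l (f l) :=
        prod_update_eval w i _ (fun l u => u (f l))
      have h2 : (∏ l, ind ((A l).2.run (jointOracle f) ∈ R' l (f l))) =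
          ind ((A i).2.run (jointOracle f) ∈ (Set.univ : Set (Gs i).Out)) *
            ∏ l ∈ Finset.univ.erase i, ind ((A l).2.run (jointOracle f) ∈ R l (f l)) :=
        prod_update_eval R i _
          (fun l Rl => ind ((A l).2.run (jointOracle f) ∈ Rl (f l)))
      have h3 : (∏ l, w l (f l)) = w i (f i) * ∏ l ∈ Finset.univ.erase i, w l (f l) :=
        (Finset.mul_prod_erase _ _ (Finset.mem_univ i)).symm
      have h4 : (∏ l, ind ((A l).2.run (jointOracle f) ∈ R l (f l))) =
          ind ((A i).2.run (jointOracle f) ∈ R i (f i)) *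
            ∏ l ∈ Finset.univ.erase i, ind ((A l).2.run (jointOracle f) ∈ R l (f l)) :=
        (Finset.mul_prod_erase _ _ (Finset.mem_univ i)).symm
      have hrun : (A i).2.run (jointOracle f) = o := STree.run_of_root_ret hroot _
      rw [h1, h2, h3, h4, hrun, ind_of_true (Set.mem_univ o)]
      ring
    have hiact : i ∈ actR Gs R := (mem_actR Gs).mpr hRi
    have hcard : (actR Gs R').card + 1 = (actR Gs R).card := by
      have hset : actR Gs R' = (actR Gs R).erase i := by
        ext l
        rw [mem_actR, Finset.mem_erase, mem_actR]
        constructor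
        · intro hl
          rcases eq_or_ne l i with rfl | hne
          · exact absurd (by rw [hR', Function.update_self]) hl
          · exact ⟨hne, by rwa [hR', Function.update_of_ne hne] at hl⟩
        · rintro ⟨hne, hl⟩
          rw [hR', Function.update_of_ne hne]; exact hl
      rw [hset, Finset.card_erase_of_mem hiact]
      have hpos : 0 < (actR Gs R).card := Finset.card_pos.mpr ⟨i, hiact⟩
      omega
    rw [hVeq]
    refine le_trans (ih (m - 1) (by omega) w' R' A (by omega)) ?_
    refine Finset.prod_le_prod' fun l _ => ?_
    rcases eq_or_ne l i with rfl | hne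
    · have e1 : R' l = fun _ => (Set.univ : Set (Gs l).Out) := by
        rw [hR', Function.update_self]
      have e2 : w' l = fun h0 => w l h0 * ind (o ∈ R l h0) := by
        rw [hw', Function.update_self]
      rw [e1, e2]
      refine le_trans (eps_triv_le Gs l _ _) ?_
      exact ret_le_eps Gs l (R l) (w l) ((A l).1) o
    · rw [hR', hw', Function.update_of_ne hne, Function.update_of_ne hne]
  -- ===================== query-rooted active games ============
  · push_neg at hret
    have hQ : ∀ i, i ∈ actR Gs R →
        ∃ qb : (q : ProdQ Gs) × (ProdAns Gs q → JTree Gs i),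
          STree.root (A i) = Sum.inr qb := by
      intro i hi
      have hiR : R i ≠ fun _ => Set.univ := (mem_actR Gs).mp hi
      rcases h : STree.root (A i) with o | qb
      · exact absurd h (hret i hiR o)
      · exact ⟨qb, rfl⟩
    choose qb hqb using hQ
    by_cases hout : ∃ i, ∃ hi : i ∈ actR Gs R, (qb i hi).1.1 ∉ actR Gs R
    -- =========== Case 2b : peel a query into an inactive game ============
    · obtain ⟨i, hi, hj⟩ := hout
      obtain ⟨hdep, hrun⟩ := STree.root_query_elim (hqb i hi)
      set q := (qb i hi).1 with hq
      set br := (qb i hi).2 with hbr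
      have hne : q.1 ≠ i := fun h => hj (h ▸ hi)
      have hRj : R q.1 = fun _ => Set.univ := by
        by_contra h; exact hj ((mem_actR Gs).mpr h)
      set w' := fun a : Fin (Gs q.1).N =>
        Function.update w q.1 (fun h0 => w q.1 h0 * ind (h0 q.2 = a)) with hw'
      set A' := fun a : Fin (Gs q.1).N => Function.update A i (br a) with hA'
      have hw'q : ∀ a, (w' a) q.1 = fun h0 => w q.1 h0 * ind (h0 q.2 = a) :=
        fun a => Function.update_self _ _ _
      have hw'ne : ∀ a l, l ≠ q.1 → (w' a) l = w l :=
        fun a l hl => Function.update_of_ne hl _ _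
      have hA'i : ∀ a, (A' a) i = br a :=
        fun a => Function.update_self _ _ _
      have hA'ne : ∀ a l, l ≠ i → (A' a) l = A l :=
        fun a l hl => Function.update_of_ne hl _ _
      have hmemi : i ∈ Finset.univ.erase q.1 :=
        Finset.mem_erase.mpr ⟨Ne.symm hne, Finset.mem_univ i⟩
      -- peel identity
      have hpeel : Vval Gs w R A = ∑ a : Fin (Gs q.1).N, Vval Gs (w' a) R (A' a) := by
        symm
        simp only [Vval]
        rw [Finset.sum_comm]
        refine Finset.sum_congr rfl fun f _ => ?_
        have h1 : ∀ a, (∏ l, (w' a) l (f l)) =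
            (w q.1 (f q.1) * ind (f q.1 q.2 = a)) *
              ∏ l ∈ Finset.univ.erase q.1, w l (f l) := by
          intro a
          exact prod_update_eval w q.1 _ (fun l u => u (f l))
        have h2 : ∀ a, (∏ l, ind (((A' a) l).2.run (jointOracle f) ∈ R l (f l))) =
            ind ((br a).2.run (jointOracle f) ∈ R i (f i)) *
              ∏ l ∈ Finset.univ.erase i, ind ((A l).2.run (jointOracle f) ∈ R l (f l)) := by
          intro a
          exact prod_update_eval A i (br a)
            (fun l s => ind (s.2.run (jointOracle f) ∈ R l (f l)))
        calc ∑ a, (∏ l, (w' a) l (f l)) *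
                ∏ l, ind (((A' a) l).2.run (jointOracle f) ∈ R l (f l))
            = ∑ a, ind (f q.1 q.2 = a) *
                ((w q.1 (f q.1) * ∏ l ∈ Finset.univ.erase q.1, w l (f l)) *
                 (ind ((br a).2.run (jointOracle f) ∈ R i (f i)) *
                  ∏ l ∈ Finset.univ.erase i,
                    ind ((A l).2.run (jointOracle f) ∈ R l (f l)))) := by
              refine Finset.sum_congr rfl fun a _ => ?_
              rw [h1 a, h2 a]; ring
          _ = (w q.1 (f q.1) * ∏ l ∈ Finset.univ.erase q.1, w l (f l)) *
                (ind ((br (f q.1 q.2)).2.run (jointOracle f) ∈ R i (f i)) *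
                  ∏ l ∈ Finset.univ.erase i,
                    ind ((A l).2.run (jointOracle f) ∈ R l (f l))) :=
              sum_ind_mul (f q.1 q.2) _
          _ = (∏ l, w l (f l)) *
                ∏ l, ind ((A l).2.run (jointOracle f) ∈ R l (f l)) := by
              rw [← Finset.mul_prod_erase Finset.univ (fun l => w l (f l))
                  (Finset.mem_univ q.1),
                ← Finset.mul_prod_erase Finset.univ
                  (fun l => ind ((A l).2.run (jointOracle f) ∈ R l (f l)))
                  (Finset.mem_univ i),
                hrun (jointOracle f)]
              rfl
      -- measure bookkeeping
      have hsum : ∀ a, (∑ l, ((A' a) l).1) + 1 = ∑ l, (A l).1 := by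
        intro a
        have e1 : (∑ l, ((A' a) l).1) =
            (br a).1 + ∑ l ∈ Finset.univ.erase i, (A l).1 :=
          sum_update_eval A i (br a) (fun l s => s.1)
        have e2 : (∑ l, (A l).1) = (A i).1 + ∑ l ∈ Finset.univ.erase i, (A l).1 :=
          (Finset.add_sum_erase _ _ (Finset.mem_univ i)).symm
        have e3 := hdep a
        omega
      have hkey : ∀ a, (∑ l, ((A' a) l).1) * (k + 1) + (actR Gs R).card + (k+1) ≤ m := by
        intro a
        calc (∑ l, ((A' a) l).1) * (k + 1) + (actR Gs R).card + (k+1)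
            = ((∑ l, ((A' a) l).1) + 1) * (k + 1) + (actR Gs R).card := by ring
          _ = (∑ l, (A l).1) * (k + 1) + (actR Gs R).card := by rw [hsum a]
          _ ≤ m := hm
      have hIH : ∀ a, Vval Gs (w' a) R (A' a) ≤
          ∏ l, eps Gs l (R l) ((w' a) l) (((A' a) l).1) := by
        intro a
        exact ih (m - 1) (by have := hkey a; omega) _ _ _ (by have := hkey a; omega)
      -- bounding the product for each branch
      have hprodle : ∀ a, (∏ l, eps Gs l (R l) ((w' a) l) (((A' a) l).1)) ≤
          (∑ h : OC Gs q.1, w q.1 h * ind (h q.2 = a)) *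
            (eps Gs i (R i) (w i) ((A i).1) *
              ∏ l ∈ (Finset.univ.erase q.1).erase i, eps Gs l (R l) (w l) ((A l).1)) := by
        intro a
        have hd1 : (∏ l, eps Gs l (R l) ((w' a) l) (((A' a) l).1)) =
            eps Gs q.1 (R q.1) ((w' a) q.1) (((A' a) q.1).1) *
              (eps Gs i (R i) ((w' a) i) (((A' a) i).1) *
                ∏ l ∈ (Finset.univ.erase q.1).erase i,
                  eps Gs l (R l) ((w' a) l) (((A' a) l).1)) := by
          rw [← Finset.mul_prod_erase Finset.univ
              (fun l => eps Gs l (R l) ((w' a) l) (((A' a) l).1)) (Finset.mem_univ q.1),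
            ← Finset.mul_prod_erase (Finset.univ.erase q.1)
              (fun l => eps Gs l (R l) ((w' a) l) (((A' a) l).1)) hmemi]
        rw [hd1]
        refine mul_le_mul' ?_ (mul_le_mul' ?_ ?_)
        · rw [hw'q a, hA'ne a q.1 hne, hRj]
          exact eps_triv_le Gs q.1 _ _
        · rw [hw'ne a i (Ne.symm hne), hA'i a]
          refine le_trans (eps_mono Gs i (R i) (w i) ((br a).1)) (le_of_eq ?_)
          rw [hdep a]
        · refine le_of_eq (Finset.prod_congr rfl fun l hl => ?_)
          have hl1 : l ≠ i := (Finset.mem_erase.mp hl).1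
          have hl2 : l ≠ q.1 := (Finset.mem_erase.mp (Finset.mem_erase.mp hl).2).1
          rw [hw'ne a l hl2, hA'ne a l hl1]
      -- summing up
      have hsum_mass : (∑ a : Fin (Gs q.1).N, ∑ h : OC Gs q.1, w q.1 h * ind (h q.2 = a))
          = ∑ h : OC Gs q.1, w q.1 h := by
        rw [Finset.sum_comm]
        refine Finset.sum_congr rfl fun h _ => ?_
        calc (∑ a, w q.1 h * ind (h q.2 = a))
            = ∑ a, ind (h q.2 = a) * w q.1 h := by
              refine Finset.sum_congr rfl fun a _ => by ring
          _ = w q.1 h := sum_ind_mul (h q.2) _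
      have hmassle : (∑ h : OC Gs q.1, w q.1 h) ≤ eps Gs q.1 (R q.1) (w q.1) ((A q.1).1) := by
        set o := (A q.1).2.run (jointOracle (fun l _ => ⟨0, (Gs l).hN⟩)) with ho
        have heq0 : (∑ h : OC Gs q.1, w q.1 h)
            = ∑ h : OC Gs q.1, w q.1 h * ind (o ∈ R q.1 h) := by
          refine Finset.sum_congr rfl fun h _ => ?_
          rw [hRj, ind_of_true (Set.mem_univ o), mul_one]
        rw [heq0]
        exact ret_le_eps Gs q.1 (R q.1) (w q.1) ((A q.1).1) o
      calc Vval Gs w R A = ∑ a : Fin (Gs q.1).N, Vval Gs (w' a) R (A' a) := hpeel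
        _ ≤ ∑ a : Fin (Gs q.1).N, (∑ h : OC Gs q.1, w q.1 h * ind (h q.2 = a)) *
              (eps Gs i (R i) (w i) ((A i).1) *
                ∏ l ∈ (Finset.univ.erase q.1).erase i, eps Gs l (R l) (w l) ((A l).1)) :=
            Finset.sum_le_sum fun a _ => le_trans (hIH a) (hprodle a)
        _ = (∑ h : OC Gs q.1, w q.1 h) *
              (eps Gs i (R i) (w i) ((A i).1) *
                ∏ l ∈ (Finset.univ.erase q.1).erase i, eps Gs l (R l) (w l) ((A l).1)) := by
            rw [← Finset.sum_mul, hsum_mass]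
        _ ≤ eps Gs q.1 (R q.1) (w q.1) ((A q.1).1) *
              (eps Gs i (R i) (w i) ((A i).1) *
                ∏ l ∈ (Finset.univ.erase q.1).erase i, eps Gs l (R l) (w l) ((A l).1)) :=
            mul_le_mul' hmassle (le_refl _)
        _ = ∏ l, eps Gs l (R l) (w l) ((A l).1) := by
            rw [← Finset.mul_prod_erase Finset.univ
                (fun l => eps Gs l (R l) (w l) ((A l).1)) (Finset.mem_univ q.1),
              ← Finset.mul_prod_erase (Finset.univ.erase q.1)
                (fun l => eps Gs l (R l) (w l) ((A l).1)) hmemi]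
    · push_neg at hout
      by_cases hempty : actR Gs R = ∅
      -- =========== Case 2c : all goals trivial ============
      · have htriv : ∀ i, R i = fun _ => Set.univ := by
          intro i
          by_contra h
          exact (Finset.eq_empty_iff_forall_notMem.mp hempty i) ((mem_actR Gs).mpr h)
        have hVeq : Vval Gs w R A = ∏ i, ∑ h : OC Gs i, w i h := by
          rw [Vval]
          have : ∀ f : ∀ i, OC Gs i,
              (∏ i, w i (f i)) * (∏ i, ind ((A i).2.run (jointOracle f) ∈ R i (f i)))
                = ∏ i, w i (f i) := by
            intro f
            rw [Finset.prod_eq_one (fun i _ => ind_of_true (by rw [htriv i]; exact Set.mem_univ _)),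
              mul_one]
          rw [Finset.sum_congr rfl fun f _ => this f, Finset.prod_univ_sum,
            Fintype.piFinset_univ]
        rw [hVeq]
        refine Finset.prod_le_prod' fun i _ => ?_
        set o := (A i).2.run (jointOracle (fun l _ => ⟨0, (Gs l).hN⟩)) with ho
        have : (∑ h : OC Gs i, w i h) = ∑ h : OC Gs i, w i h * ind (o ∈ R i h) := by
          refine Finset.sum_congr rfl fun h _ => ?_
          rw [htriv i, ind_of_true (Set.mem_univ o), mul_one]
        rw [this]
        exact ret_le_eps Gs i (R i) (w i) ((A i).1) o
      -- =========== Case 2d : cycle peel ============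
      · -- cycle peel
        obtain ⟨i₀, hi₀⟩ := Finset.nonempty_iff_ne_empty.mpr hempty
        set jf : Fin k → Fin k :=
          fun i => if h : i ∈ actR Gs R then (qb i h).1.1 else i with hjf
        have hjfAct : ∀ i ∈ actR Gs R, jf i ∈ actR Gs R := by
          intro i hi
          show (if h : i ∈ actR Gs R then (qb i h).1.1 else i) ∈ actR Gs R
          rw [dif_pos hi]
          exact hout i hi
        obtain ⟨per, hper, c, hcinj, hcAct, hcj⟩ :=
          exists_cycle (actR Gs R) jf hjfAct i₀ hi₀
        haveI : NeZero per := ⟨hper.ne'⟩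
        have htgt : ∀ z, (qb (c z) (hcAct z)).1.1 = c (z + 1) := by
          intro z
          have h := hcj z
          have h2 : jf (c z) = (qb (c z) (hcAct z)).1.1 := dif_pos (hcAct z)
          rw [h2] at h
          exact h
        have hretarget : ∀ z, ∃ (x : Fin (Gs (c (z+1))).M)
            (br' : Fin (Gs (c (z+1))).N → JTree Gs (c z)),
            STree.root (A (c z)) = Sum.inr ⟨⟨c (z+1), x⟩, br'⟩ :=
          fun z => root_retarget Gs (hqb (c z) (hcAct z)) (htgt z)
        choose cell brn hroot using hretarget
        have hdep : ∀ z (a : Fin (Gs (c (z+1))).N), (brn z a).1 + 1 = (A (c z)).1 :=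
          fun z => (STree.root_query_elim (hroot z)).1
        have hrun : ∀ z (g : (q : ProdQ Gs) → ProdAns Gs q),
            (A (c z)).2.run g = (brn z (g ⟨c (z+1), cell z⟩)).2.run g :=
          fun z => (STree.root_query_elim (hroot z)).2
        -- list of cycle indices
        set L := (Finset.univ : Finset (ZMod per)).toList with hL
        have hLmem : ∀ z : ZMod per, z ∈ L := fun z =>
          Finset.mem_toList.mpr (Finset.mem_univ z)
        have hLnd : L.Nodup := Finset.nodup_toList _
        have hinjsucc : Function.Injective (fun z : ZMod per => c (z + 1)) := by
          intro z z' h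
          have := hcinj h
          exact add_right_cancel this
        have hnd1 : (L.map (fun z => c (z + 1))).Nodup := hLnd.map hinjsucc
        have hnd0 : (L.map c).Nodup := hLnd.map hcinj
        -- the cycle as a finset
        set D := Finset.univ.image c with hD
        have hD1 : Finset.univ.image (fun z : ZMod per => c (z + 1)) = D := by
          rw [hD]
          ext l
          simp only [Finset.mem_image, Finset.mem_univ, true_and]
          constructor
          · rintro ⟨z, rfl⟩; exact ⟨z + 1, rfl⟩
          · rintro ⟨z, rfl⟩; exact ⟨z - 1, by rw [sub_add_cancel]⟩
        have hcmemD : ∀ z, c z ∈ D := fun z => Finset.mem_image_of_mem c (Finset.mem_univ z)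
        have hc1memD : ∀ z, c (z + 1) ∈ D := fun z => hcmemD (z + 1)
        have hDc0 : ∀ l ∈ Dᶜ, ∀ z : ZMod per, c z ≠ l := by
          intro l hl z h
          exact (Finset.mem_compl.mp hl) (h ▸ hcmemD z)
        have hDc1 : ∀ l ∈ Dᶜ, ∀ z : ZMod per, c (z + 1) ≠ l :=
          fun l hl z => hDc0 l hl (z + 1)
        -- the peeled data
        set w' := fun v : (∀ z : ZMod per, Fin (Gs (c (z+1))).N) =>
          updMany (fun z : ZMod per => c (z + 1))
            (fun z => fun h0 => w (c (z + 1)) h0 * ind (h0 (cell z) = v z)) L w with hw'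
        set A' := fun v : (∀ z : ZMod per, Fin (Gs (c (z+1))).N) =>
          updMany (fun z : ZMod per => c z) (fun z => brn z (v z)) L A with hA'
        have hw'on : ∀ v z, (w' v) (c (z + 1)) =
            fun h0 => w (c (z + 1)) h0 * ind (h0 (cell z) = v z) :=
          fun v z => updMany_eq_of_mem _ _ _ L z (hLmem z) hnd1
        have hw'off : ∀ v l, l ∈ Dᶜ → (w' v) l = w l :=
          fun v l hl => updMany_eq_of_not_mem _ _ _ L l (fun z _ => hDc1 l hl z)
        have hA'on : ∀ v z, (A' v) (c z) = brn z (v z) :=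
          fun v z => updMany_eq_of_mem _ _ _ L z (hLmem z) hnd0
        have hA'off : ∀ v l, l ∈ Dᶜ → (A' v) l = A l :=
          fun v l hl => updMany_eq_of_not_mem _ _ _ L l (fun z _ => hDc0 l hl z)
        -- injectivity for prod_image / sum_image
        have hinjOn0 : ∀ x ∈ Finset.univ, ∀ y ∈ Finset.univ, c x = c y → x = y :=
          fun x _ y _ h => hcinj h
        have hinjOn1 : ∀ x ∈ Finset.univ, ∀ y ∈ Finset.univ,
            c (x + 1) = c (y + 1) → x = y := fun x _ y _ h => hinjsucc h
        -- peel identity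
        have hpeel : Vval Gs w R A =
            ∑ v : (∀ z : ZMod per, Fin (Gs (c (z+1))).N), Vval Gs (w' v) R (A' v) := by
          symm
          simp only [Vval]
          rw [Finset.sum_comm]
          refine Finset.sum_congr rfl fun f _ => ?_
          have h1 : ∀ v, (∏ l, (w' v) l (f l)) =
              (∏ z : ZMod per, ind (f (c (z + 1)) (cell z) = v z)) * ∏ l, w l (f l) := by
            intro v
            have e1 : (∏ l ∈ D, (w' v) l (f l)) =
                (∏ z : ZMod per, w (c (z + 1)) (f (c (z + 1)))) *
                  ∏ z : ZMod per, ind (f (c (z + 1)) (cell z) = v z) := by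
              rw [← hD1, Finset.prod_image hinjOn1, ← Finset.prod_mul_distrib]
              refine Finset.prod_congr rfl fun z _ => ?_
              rw [hw'on v z]
            have e2 : (∏ l ∈ D, w l (f l)) =
                ∏ z : ZMod per, w (c (z + 1)) (f (c (z + 1))) := by
              rw [← hD1, Finset.prod_image hinjOn1]
            calc (∏ l, (w' v) l (f l))
                = (∏ l ∈ D, (w' v) l (f l)) * ∏ l ∈ Dᶜ, (w' v) l (f l) :=
                  (Finset.prod_mul_prod_compl D _).symm
              _ = ((∏ z : ZMod per, w (c (z + 1)) (f (c (z + 1)))) *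
                    ∏ z : ZMod per, ind (f (c (z + 1)) (cell z) = v z)) *
                    ∏ l ∈ Dᶜ, w l (f l) := by
                  rw [e1]
                  congr 1
                  exact Finset.prod_congr rfl fun l hl => by rw [hw'off v l hl]
              _ = (∏ z : ZMod per, ind (f (c (z + 1)) (cell z) = v z)) * ∏ l, w l (f l) := by
                  rw [← Finset.prod_mul_prod_compl D (fun l => w l (f l)), e2]
                  ring
          have h2 : ∀ v, (∏ l, ind (((A' v) l).2.run (jointOracle f) ∈ R l (f l))) =
              (∏ z : ZMod per,
                ind ((brn z (v z)).2.run (jointOracle f) ∈ R (c z) (f (c z)))) *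
                ∏ l ∈ Dᶜ, ind ((A l).2.run (jointOracle f) ∈ R l (f l)) := by
            intro v
            calc (∏ l, ind (((A' v) l).2.run (jointOracle f) ∈ R l (f l)))
                = (∏ l ∈ D, ind (((A' v) l).2.run (jointOracle f) ∈ R l (f l))) *
                    ∏ l ∈ Dᶜ, ind (((A' v) l).2.run (jointOracle f) ∈ R l (f l)) :=
                  (Finset.prod_mul_prod_compl D _).symm
              _ = (∏ z : ZMod per,
                    ind ((brn z (v z)).2.run (jointOracle f) ∈ R (c z) (f (c z)))) *
                    ∏ l ∈ Dᶜ, ind ((A l).2.run (jointOracle f) ∈ R l (f l)) := by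
                  congr 1
                  · rw [hD, Finset.prod_image hinjOn0]
                    exact Finset.prod_congr rfl fun z _ => by rw [hA'on v z]
                  · exact Finset.prod_congr rfl fun l hl => by rw [hA'off v l hl]
          calc (∑ v : (∀ z : ZMod per, Fin (Gs (c (z+1))).N),
                  (∏ l, (w' v) l (f l)) *
                    ∏ l, ind (((A' v) l).2.run (jointOracle f) ∈ R l (f l)))
              = ∑ v : (∀ z : ZMod per, Fin (Gs (c (z+1))).N),
                  (∏ z : ZMod per, ind (f (c (z + 1)) (cell z) = v z)) *
                  ((∏ l, w l (f l)) *
                    ((∏ z : ZMod per,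
                      ind ((brn z (v z)).2.run (jointOracle f) ∈ R (c z) (f (c z)))) *
                      ∏ l ∈ Dᶜ, ind ((A l).2.run (jointOracle f) ∈ R l (f l)))) := by
                refine Finset.sum_congr rfl fun v _ => ?_
                rw [h1 v, h2 v]; ring
            _ = (∏ l, w l (f l)) *
                  ((∏ z : ZMod per,
                    ind ((brn z (f (c (z + 1)) (cell z))).2.run (jointOracle f)
                      ∈ R (c z) (f (c z)))) *
                    ∏ l ∈ Dᶜ, ind ((A l).2.run (jointOracle f) ∈ R l (f l))) :=
                sum_pi_ind_mul (fun z => f (c (z + 1)) (cell z)) _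
            _ = (∏ l, w l (f l)) *
                  ∏ l, ind ((A l).2.run (jointOracle f) ∈ R l (f l)) := by
                congr 1
                have e3 : (∏ z : ZMod per,
                    ind ((brn z (f (c (z + 1)) (cell z))).2.run (jointOracle f)
                      ∈ R (c z) (f (c z)))) =
                    ∏ l ∈ D, ind ((A l).2.run (jointOracle f) ∈ R l (f l)) := by
                  rw [hD, Finset.prod_image hinjOn0]
                  refine Finset.prod_congr rfl fun z _ => ?_
                  rw [hrun z (jointOracle f)]
                  rfl
                rw [e3, Finset.prod_mul_prod_compl D]
        -- measure bookkeeping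
        have hsum : ∀ v, (∑ l, ((A' v) l).1) + per = ∑ l, (A l).1 := by
          intro v
          have e1 : (∑ l, ((A' v) l).1) =
              (∑ z : ZMod per, (brn z (v z)).1) + ∑ l ∈ Dᶜ, (A l).1 := by
            rw [← Finset.sum_add_sum_compl D (fun l => ((A' v) l).1)]
            congr 1
            · rw [hD, Finset.sum_image hinjOn0]
              exact Finset.sum_congr rfl fun z _ => by rw [hA'on v z]
            · exact Finset.sum_congr rfl fun l hl => by rw [hA'off v l hl]
          have e2 : (∑ l, (A l).1) = (∑ z : ZMod per, (A (c z)).1) + ∑ l ∈ Dᶜ, (A l).1 := by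
            rw [← Finset.sum_add_sum_compl D (fun l => (A l).1)]
            congr 1
            rw [hD, Finset.sum_image hinjOn0]
          have e3 : (∑ z : ZMod per, (brn z (v z)).1) + per = ∑ z : ZMod per, (A (c z)).1 := by
            have : (∑ z : ZMod per, (A (c z)).1) = ∑ z : ZMod per, ((brn z (v z)).1 + 1) :=
              Finset.sum_congr rfl fun z _ => (hdep z (v z)).symm
            rw [this, Finset.sum_add_distrib, Finset.sum_const, Finset.card_univ,
              ZMod.card per, smul_eq_mul, mul_one]
          omega
        have hkey : ∀ v, (∑ l, ((A' v) l).1) * (k + 1) + (actR Gs R).card + (k + 1) ≤ m := by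
          intro v
          have h1 : ((∑ l, ((A' v) l).1) + 1) * (k + 1) ≤ ((∑ l, ((A' v) l).1) + per) * (k + 1) :=
            Nat.mul_le_mul_right _ (by omega)
          have h2 : ((∑ l, ((A' v) l).1) + per) * (k + 1) + (actR Gs R).card ≤ m := by
            rw [hsum v]; exact hm
          have h3 : ((∑ l, ((A' v) l).1) + 1) * (k + 1) =
              (∑ l, ((A' v) l).1) * (k + 1) + (k + 1) := by ring
          omega
        have hIH : ∀ v, Vval Gs (w' v) R (A' v) ≤
            ∏ l, eps Gs l (R l) ((w' v) l) (((A' v) l).1) := by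
          intro v
          exact ih (m - 1) (by have := hkey v; omega) _ _ _ (by have := hkey v; omega)
        -- depth constancy along branches
        set a0 : ∀ z : ZMod per, Fin (Gs (c (z+1))).N :=
          fun z => ⟨0, (Gs (c (z+1))).hN⟩ with ha0
        set t' : ZMod per → ℕ := fun z => (brn z (a0 z)).1 with ht'
        have hdepc : ∀ z a, (brn z a).1 = t' z := by
          intro z a
          show (brn z a).1 = (brn z (a0 z)).1
          have h1 := hdep z a
          have h2 := hdep z (a0 z)
          omega
        have ht'succ : ∀ z, t' z + 1 = (A (c z)).1 := by
          intro z
          show (brn z (a0 z)).1 + 1 = (A (c z)).1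
          exact hdep z (a0 z)
        -- per-branch product bound
        set Prest := ∏ l ∈ Dᶜ, eps Gs l (R l) (w l) ((A l).1) with hPrest
        have hprodle : ∀ v, (∏ l, eps Gs l (R l) ((w' v) l) (((A' v) l).1)) =
            (∏ z : ZMod per,
              eps Gs (c (z + 1)) (R (c (z + 1)))
                (fun h0 => w (c (z + 1)) h0 * ind (h0 (cell z) = v z)) (t' (z + 1))) *
              Prest := by
          intro v
          rw [← Finset.prod_mul_prod_compl D
            (fun l => eps Gs l (R l) ((w' v) l) (((A' v) l).1))]
          congr 1
          · rw [← hD1, Finset.prod_image hinjOn1]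
            refine Finset.prod_congr rfl fun z _ => ?_
            rw [hw'on v z, hA'on v (z + 1), hdepc (z + 1) (v (z + 1))]
          · exact Finset.prod_congr rfl fun l hl => by
              rw [hw'off v l hl, hA'off v l hl]
        calc Vval Gs w R A
            = ∑ v : (∀ z : ZMod per, Fin (Gs (c (z+1))).N), Vval Gs (w' v) R (A' v) := hpeel
          _ ≤ ∑ v : (∀ z : ZMod per, Fin (Gs (c (z+1))).N),
                (∏ z : ZMod per,
                  eps Gs (c (z + 1)) (R (c (z + 1)))
                    (fun h0 => w (c (z + 1)) h0 * ind (h0 (cell z) = v z)) (t' (z + 1))) *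
                  Prest :=
              Finset.sum_le_sum fun v _ => le_trans (hIH v) (le_of_eq (hprodle v))
          _ = (∏ z : ZMod per, ∑ a : Fin (Gs (c (z+1))).N,
                  eps Gs (c (z + 1)) (R (c (z + 1)))
                    (fun h0 => w (c (z + 1)) h0 * ind (h0 (cell z) = a)) (t' (z + 1))) *
                  Prest := by
              rw [← Finset.sum_mul]
              congr 1
              rw [Finset.prod_univ_sum, Fintype.piFinset_univ]
          _ ≤ (∏ z : ZMod per, eps Gs (c (z + 1)) (R (c (z + 1))) (w (c (z + 1)))
                  ((A (c (z + 1))).1)) * Prest := by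
              refine mul_le_mul' (Finset.prod_le_prod' fun z _ => ?_) (le_refl _)
              refine le_trans (eps_compose Gs (c (z + 1)) (R (c (z + 1))) (w (c (z + 1)))
                (t' (z + 1)) (cell z)) (le_of_eq ?_)
              rw [ht'succ (z + 1)]
          _ = ∏ l, eps Gs l (R l) (w l) ((A l).1) := by
              rw [← Finset.prod_mul_prod_compl D (fun l => eps Gs l (R l) (w l) ((A l).1))]
              congr 1
              rw [← hD1, Finset.prod_image hinjOn1]



lemma eps_le_unifSec (i : Fin k) (t : ℕ) :
    eps Gs i ((Gs i).R) (fun h => (Gs i).μ h) t ≤ (Gs i).unifSec t := by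
  refine iSup_le fun C => ?_
  rw [PlainGame.unifSec]
  refine le_iSup_of_le (PMF.pure C) ?_
  rw [tsum_eq_single C (fun b hb => by rw [PMF.pure_apply, if_neg hb, zero_mul])]
  rw [PMF.pure_apply, if_pos rfl, one_mul, tsum_fintype]

end SDPTaux

end

/-- Strong direct product theorem for memoryless algorithms:
a `(T 0, …, T (k-1))`-memoryless algorithm for the direct product
`G 0 × ⋯ × G (k-1)` wins with probability at most `∏ i, ε_{G i}(T i)`. -/
theorem memoryless_sdpt {k : ℕ} (Gs : Fin k → PlainGame) (T : Fin k → ℕ)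
    (A : (i : Fin k) → DT (ProdQ Gs) (ProdAns Gs) (Gs i).Out (T i)) :
    memorylessWinProb Gs A ≤ ∏ i, (Gs i).unifSec (T i) := by
  classical
  have key := SDPTaux.main_ineq Gs
    ((∑ i, T i) * (k + 1) + (SDPTaux.actR Gs (fun i => (Gs i).R)).card)
    (fun i => fun h => (Gs i).μ h) (fun i => (Gs i).R) (fun i => ⟨T i, A i⟩)
    (le_refl _)
  have hV : memorylessWinProb Gs A =
      SDPTaux.Vval Gs (fun i => fun h => (Gs i).μ h) (fun i => (Gs i).R)
        (fun i => ⟨T i, A i⟩) := by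
    rw [memorylessWinProb, tsum_fintype, SDPTaux.Vval]
    refine Finset.sum_congr rfl fun f _ => ?_
    rw [prod_ind]
  rw [hV]
  refine le_trans key (Finset.prod_le_prod' fun i _ => ?_)
  exact SDPTaux.eps_le_unifSec Gs i (T i)
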